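/- Let G = (V, E) be a finite simple claw-free graph and let S and S' be independent sets of G. Then the induced subgraph G[S Δ S'] on the symmetric difference S Δ S' is a bipartite graph of maximum degree at most two: no two vertices of S \ S' are adjacent, no two vertices of S' \ S are adjacent, and every vertex of S Δ S' has at most two neighbors lying in S Δ S'. (Lemma 1.) -/
import Mathlib


open scoped Classical

universe u

/-- `G` is claw-free: no vertex has three pairwise distinct, pairwise non-adjacent neighbors. -/
def ClawFree {V : Type u} (G : SimpleGraph V) : Prop :=
  ¬ ∃ c x y z : V, x ≠ y ∧ x ≠ z ∧ y ≠ z ∧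
    G.Adj c x ∧ G.Adj c y ∧ G.Adj c z ∧ ¬ G.Adj x y ∧ ¬ G.Adj x z ∧ ¬ G.Adj y z

/-- `S` is an independent set of `G`. -/
def IsIndep {V : Type u} (G : SimpleGraph V) (S : Finset V) : Prop :=
  ∀ u ∈ S, ∀ v ∈ S, ¬ G.Adj u v

/-- Lemma 1: in a claw-free graph, the subgraph induced on the symmetric difference of two
independent sets is bipartite with maximum degree at most two. -/
theorem symmDiff_indep_bipartite_maxDegree_le_two {V : Type u} [Fintype V] [DecidableEq V]
    (G : SimpleGraph V) (hcf : ClawFree G) (S S' : Finset V)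
    (hS : IsIndep G S) (hS' : IsIndep G S') :
    (∀ u ∈ S \ S', ∀ v ∈ S \ S', ¬ G.Adj u v) ∧
    (∀ u ∈ S' \ S, ∀ v ∈ S' \ S, ¬ G.Adj u v) ∧
    (∀ v ∈ (S \ S') ∪ (S' \ S),
      (((S \ S') ∪ (S' \ S)).filter fun u => G.Adj v u).card ≤ 2) := by
  refine ⟨fun u hu v hv => hS u (Finset.mem_sdiff.1 hu).1 v (Finset.mem_sdiff.1 hv).1,
    fun u hu v hv => hS' u (Finset.mem_sdiff.1 hu).1 v (Finset.mem_sdiff.1 hv).1, ?_⟩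
  intro v hv
  by_contra h
  push_neg at h
  obtain ⟨x, hx, y, hy, z, hz, hxy, hxz, hyz⟩ := Finset.two_lt_card.1 h
  simp only [Finset.mem_filter] at hx hy hz
  -- all of x, y, z lie on the opposite side from v, hence pairwise non-adjacent
  have key : ∀ w, w ∈ (S \ S') ∪ (S' \ S) → G.Adj v w →
      (v ∈ S \ S' → w ∈ S' \ S) ∧ (v ∈ S' \ S → w ∈ S \ S') := by
    intro w hw ha
    rcases Finset.mem_union.1 hw with hw | hw <;>
      constructor <;> intro hv' <;>
      first
        | exact hw
        | exact absurd ha (hS v (Finset.mem_sdiff.1 hv').1 w (Finset.mem_sdiff.1 hw).1)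
        | exact absurd ha (hS' v (Finset.mem_sdiff.1 hv').1 w (Finset.mem_sdiff.1 hw).1)
  have nadj : ∀ a b : V, a ∈ (S \ S') ∪ (S' \ S) → b ∈ (S \ S') ∪ (S' \ S) →
      G.Adj v a → G.Adj v b → ¬ G.Adj a b := by
    intro a b ha hb hva hvb
    rcases Finset.mem_union.1 hv with hv' | hv'
    · exact hS' a (Finset.mem_sdiff.1 ((key a ha hva).1 hv')).1
        b (Finset.mem_sdiff.1 ((key b hb hvb).1 hv')).1
    · exact hS a (Finset.mem_sdiff.1 ((key a ha hva).2 hv')).1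
        b (Finset.mem_sdiff.1 ((key b hb hvb).2 hv')).1
  exact hcf ⟨v, x, y, z, hxy, hxz, hyz, hx.2, hy.2, hz.2,
    nadj x y hx.1 hy.1 hx.2 hy.2, nadj x z hx.1 hz.1 hx.2 hz.2,
    nadj y z hy.1 hz.1 hy.2 hz.2⟩
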